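/- arXiv:1305.2393 — 5 statements merged into one kernel-verified Lean document; each statement's English description precedes it below -/
import Mathlib

section
/- For F ∈ GL⁺(n,ℝ) with polar decomposition F = R·U, and for every Q ∈ SO(n), one has ‖QᵀF − Id‖ = ‖F − Q‖; hence min_{Q∈SO(n)} ‖QᵀF − Id‖² = ‖U − Id‖². -/
open Matrix

noncomputable def frobSq {n : ℕ} (X : Matrix (Fin n) (Fin n) ℝ) : ℝ :=
  Matrix.trace (Xᵀ * X)

noncomputable def symPart {n : ℕ} (X : Matrix (Fin n) (Fin n) ℝ) : Matrix (Fin n) (Fin n) ℝ :=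
  (1 / 2 : ℝ) • (X + Xᵀ)

noncomputable def skewPart {n : ℕ} (X : Matrix (Fin n) (Fin n) ℝ) : Matrix (Fin n) (Fin n) ℝ :=
  (1 / 2 : ℝ) • (X - Xᵀ)

noncomputable def devPart {n : ℕ} (X : Matrix (Fin n) (Fin n) ℝ) : Matrix (Fin n) (Fin n) ℝ :=
  X - (Matrix.trace X / (n : ℝ)) • (1 : Matrix (Fin n) (Fin n) ℝ)

def SOn (n : ℕ) : Set (Matrix (Fin n) (Fin n) ℝ) :=
  {Q | Qᵀ * Q = 1 ∧ Q.det = 1}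

lemma conjT_eq_T {n : ℕ} (A : Matrix (Fin n) (Fin n) ℝ) : Aᴴ = Aᵀ := by
  ext i j; simp [conjTranspose_apply]

lemma trace_orth_le {n : ℕ} (P U : Matrix (Fin n) (Fin n) ℝ)
    (hP : Pᵀ * P = 1) (hU : U.PosSemidef) :
    Matrix.trace (Pᵀ * U) ≤ Matrix.trace U := by
  have hPPt : P * Pᵀ = 1 := mul_eq_one_comm.mp hP
  obtain ⟨S, hSsym, hSS⟩ : ∃ S : Matrix (Fin n) (Fin n) ℝ, Sᵀ = S ∧ S * S = U := by
    open scoped MatrixOrder in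
    refine ⟨CFC.sqrt U, ?_, CFC.sqrt_mul_sqrt_self U hU.nonneg⟩
    open scoped MatrixOrder in
    have := (CFC.sqrt_nonneg U).posSemidef.1
    rwa [Matrix.IsHermitian, conjT_eq_T] at this
  set M := S - Pᵀ * S with hM
  have h0 : 0 ≤ Matrix.trace (Mᵀ * M) := by
    rw [Matrix.trace]
    refine Finset.sum_nonneg fun i _ => ?_
    simp only [Matrix.diag_apply, Matrix.mul_apply, Matrix.transpose_apply]
    exact Finset.sum_nonneg fun j _ => mul_self_nonneg _
  have hexp : Mᵀ * M = U + U - S * Pᵀ * S - S * P * S := by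
    simp only [hM, Matrix.transpose_sub, Matrix.transpose_mul, Matrix.transpose_transpose,
      hSsym]
    rw [Matrix.sub_mul, Matrix.mul_sub, Matrix.mul_sub]
    rw [show S * P * (Pᵀ * S) = S * (P * Pᵀ) * S by noncomm_ring]
    rw [hPPt, Matrix.mul_one, hSS]
    simp only [Matrix.mul_assoc]
    abel
  have h1 : Matrix.trace (S * Pᵀ * S) = Matrix.trace (Pᵀ * U) := by
    rw [Matrix.trace_mul_cycle, hSS, Matrix.trace_mul_comm]
  have h2 : Matrix.trace (S * P * S) = Matrix.trace (Pᵀ * U) := by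
    rw [Matrix.trace_mul_cycle, hSS, Matrix.trace_mul_comm]
    calc Matrix.trace (P * U) = Matrix.trace ((P * U)ᵀ) := (Matrix.trace_transpose _).symm
    _ = Matrix.trace (Uᵀ * Pᵀ) := by rw [Matrix.transpose_mul]
    _ = Matrix.trace (Pᵀ * Uᵀ) := Matrix.trace_mul_comm _ _
    _ = Matrix.trace (Pᵀ * U) := by
          rw [show Uᵀ = U by rw [← conjT_eq_T]; exact hU.1]
  rw [hexp] at h0
  simp only [Matrix.trace_sub, Matrix.trace_add, h1, h2] at h0
  linarith

/-- ‖QᵀF − 1‖ = ‖F − Q‖ for any Q ∈ SO(n), hence the minimum of ‖QᵀF − 1‖² over SO(n)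
equals ‖U − 1‖². -/
theorem stmt3 (n : ℕ) (F R U : Matrix (Fin n) (Fin n) ℝ)
    (hF : 0 < F.det) (hR : R ∈ SOn n)
    (hUsym : Uᵀ = U) (hUpos : U.PosDef) (hUsq : U * U = Fᵀ * F)
    (hpolar : F = R * U) :
    (∀ Q ∈ SOn n, frobSq (Qᵀ * F - 1) = frobSq (F - Q)) ∧
    IsLeast {v : ℝ | ∃ Q ∈ SOn n, v = frobSq (Qᵀ * F - 1)} (frobSq (U - 1)) := by
  have part1 : ∀ Q ∈ SOn n, frobSq (Qᵀ * F - 1) = frobSq (F - Q) := by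
    intro Q hQ
    obtain ⟨hQ1, _⟩ := hQ
    have hQQt : Q * Qᵀ = 1 := mul_eq_one_comm.mp hQ1
    have key : Qᵀ * F - 1 = Qᵀ * (F - Q) := by
      rw [Matrix.mul_sub, hQ1]
    rw [frobSq, frobSq, key, Matrix.transpose_mul, Matrix.transpose_transpose]
    rw [Matrix.mul_assoc, ← Matrix.mul_assoc Q, hQQt, Matrix.one_mul]
  -- expansion lemma: frobSq (Qᵀ F - 1) = tr(FᵀF) - 2 tr(QᵀF) + n
  have expand : ∀ Q : Matrix (Fin n) (Fin n) ℝ, Qᵀ * Q = 1 →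
      frobSq (Qᵀ * F - 1) = Matrix.trace (Fᵀ * F) - 2 * Matrix.trace (Qᵀ * F) + n := by
    intro Q hQ1
    have hQQt : Q * Qᵀ = 1 := mul_eq_one_comm.mp hQ1
    rw [frobSq]
    have : (Qᵀ * F - 1)ᵀ * (Qᵀ * F - 1)
        = Fᵀ * F - Fᵀ * Q - Qᵀ * F + 1 := by
      rw [Matrix.transpose_sub, Matrix.transpose_mul, Matrix.transpose_transpose,
        Matrix.transpose_one, Matrix.sub_mul, Matrix.mul_sub, Matrix.mul_sub]
      rw [show Fᵀ * Q * (Qᵀ * F) = Fᵀ * (Q * Qᵀ) * F by noncomm_ring, hQQt]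
      simp [Matrix.mul_assoc]
      abel
    rw [this]
    have htr : Matrix.trace (Fᵀ * Q) = Matrix.trace (Qᵀ * F) := by
      calc Matrix.trace (Fᵀ * Q) = Matrix.trace ((Fᵀ * Q)ᵀ) := (Matrix.trace_transpose _).symm
      _ = Matrix.trace (Qᵀ * F) := by rw [Matrix.transpose_mul, Matrix.transpose_transpose]
    simp only [Matrix.trace_add, Matrix.trace_sub, htr, Matrix.trace_one, Fintype.card_fin]
    push_cast
    ring
  refine ⟨part1, ?_, ?_⟩
  · -- membership: Q = R
    obtain ⟨hR1, hRdet⟩ := hR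
    refine ⟨R, ⟨hR1, hRdet⟩, ?_⟩
    have : Rᵀ * F = U := by rw [hpolar, ← Matrix.mul_assoc, hR1, Matrix.one_mul]
    rw [this]
  · rintro v ⟨Q, ⟨hQ1, hQdet⟩, rfl⟩
    obtain ⟨hR1, hRdet⟩ := hR
    have hRRt : R * Rᵀ = 1 := mul_eq_one_comm.mp hR1
    -- tr(QᵀF) = tr(PᵀU) with P = Rᵀ Q
    have hkey : Matrix.trace (Qᵀ * F) ≤ Matrix.trace U := by
      have hP : (Rᵀ * Q)ᵀ * (Rᵀ * Q) = 1 := by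
        rw [Matrix.transpose_mul, Matrix.transpose_transpose, Matrix.mul_assoc,
          ← Matrix.mul_assoc R, hRRt, Matrix.one_mul, hQ1]
      have := trace_orth_le (Rᵀ * Q) U hP hUpos.posSemidef
      have heq : (Rᵀ * Q)ᵀ * U = Qᵀ * F := by
        rw [Matrix.transpose_mul, Matrix.transpose_transpose, hpolar, Matrix.mul_assoc]
      rwa [heq] at this
    have hU1 : frobSq (U - 1) = Matrix.trace (Fᵀ * F) - 2 * Matrix.trace U + n := by
      rw [frobSq]
      have : (U - 1)ᵀ * (U - 1) = Fᵀ * F - U - U + 1 := by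
        rw [Matrix.transpose_sub, Matrix.transpose_one, hUsym, Matrix.sub_mul,
          Matrix.mul_sub, Matrix.mul_sub, hUsq]
        simp [Matrix.mul_one, Matrix.one_mul]
        abel
      rw [this]
      simp only [Matrix.trace_add, Matrix.trace_sub, Matrix.trace_one, Fintype.card_fin]
      push_cast
      ring
    rw [hU1, expand Q hQ1]
    linarith
end

section
/- Let X ∈ ℝ^{n×n} with exp(X) symmetric positive definite, and let S = log(exp X) be the principal logarithm (so S is symmetric). Then ‖X‖ ≥ ‖S‖ in the Frobenius norm; i.e., among all real matrix logarithms of a symmetric positive definite matrix P, the principal (symmetric) logarithm has minimal Frobenius norm. -/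
open Matrix

section Stmt6Helpers

open NormedSpace Polynomial

attribute [local instance] Matrix.linftyOpSemiNormedRing Matrix.linftyOpNormedRing
  Matrix.linftyOpNormedAlgebra

private theorem trace_eq_zero_of_exp_eq_one {N : ℕ} (B : Matrix (Fin N) (Fin N) ℝ)
    (hB : exp B = 1) : Matrix.trace B = 0 := by
  rcases Nat.eq_zero_or_pos N with h0 | hpos
  · subst h0
    simp [Matrix.trace]
  have hne : Nonempty (Fin N) := ⟨⟨0, hpos⟩⟩
  set f : Matrix (Fin N) (Fin N) ℝ →+* Matrix (Fin N) (Fin N) ℂ :=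
    (algebraMap ℝ ℂ).mapMatrix with hf
  have hfc : Continuous f := by
    refine continuous_matrix fun i j => ?_
    exact Complex.continuous_ofReal.comp (continuous_id.matrix_elem i j)
  set M : Matrix (Fin N) (Fin N) ℂ := f B with hM
  have hBC : exp M = 1 := by
    have h1 : exp M = f (exp B) := (map_exp f hfc B).symm
    rw [h1, hB, _root_.map_one]
  have htr : Matrix.trace M = M.charpoly.roots.sum :=
    Matrix.trace_eq_sum_roots_charpoly M
  have hre : ∀ ν ∈ M.charpoly.roots, ν.re = 0 := by
    intro ν hν
    have hroot : M.charpoly.eval ν = 0 := by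
      exact ((Polynomial.mem_roots (Matrix.charpoly_monic M).ne_zero).mp hν)
    have hdet : ((Matrix.scalar (Fin N)) ν - M).det = 0 := by
      have h := _root_.eval_det (charmatrix M) ν
      rw [← Matrix.charpoly, matPolyEquiv_charmatrix, Polynomial.eval_sub,
        Polynomial.eval_X, Polynomial.eval_C] at h
      rw [← h, hroot]
    have hspec : ν ∈ spectrum ℂ M := by
      rw [spectrum.mem_iff]
      intro hunit
      rw [Matrix.isUnit_iff_isUnit_det] at hunit
      have : (algebraMap ℂ (Matrix (Fin N) (Fin N) ℂ)) ν = (Matrix.scalar (Fin N)) ν := rfl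
      rw [this, hdet] at hunit
      exact (not_isUnit_zero hunit)
    have hmem : exp ν ∈ spectrum ℂ (exp M) := spectrum.exp_mem_exp M hspec
    rw [hBC] at hmem
    have hone : exp ν = 1 := by
      by_contra hne'
      refine (spectrum.mem_iff.mp hmem) ?_
      rw [← _root_.map_one (algebraMap ℂ (Matrix (Fin N) (Fin N) ℂ)), ← map_sub]
      exact IsUnit.map _ (isUnit_iff_ne_zero.mpr (sub_ne_zero.mpr hne'))
    have hce : Complex.exp ν = 1 := by rw [Complex.exp_eq_exp_ℂ]; exact hone
    have habs := congrArg norm hce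
    rw [Complex.norm_exp, norm_one] at habs
    have : Real.exp ν.re = Real.exp 0 := by rw [habs, Real.exp_zero]
    exact Real.exp_eq_exp.mp this
  have htrc : ((Matrix.trace B : ℝ) : ℂ) = Matrix.trace M := by
    simp [hM, hf, Matrix.trace, RingHom.mapMatrix_apply, Matrix.map_apply]
  have hzero : (((Matrix.trace B : ℝ) : ℂ)).re = 0 := by
    rw [htrc, htr, ← Complex.coe_reAddGroupHom, map_multiset_sum]
    refine Multiset.sum_eq_zero ?_
    intro x hx
    rcases Multiset.mem_map.mp hx with ⟨ν, hν, rfl⟩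
    exact hre ν hν
  simpa using hzero

private theorem trace_diag_mul_eq_zero {N : ℕ} (μ : Fin N → ℝ) (W : Matrix (Fin N) (Fin N) ℝ)
    (hW0 : ∀ i j, μ i ≠ μ j → W i j = 0)
    (hexpW : exp W = 1) : Matrix.trace (Matrix.diagonal μ * W) = 0 := by
  classical
  have key : ∀ c : ℝ,
      Matrix.trace (Matrix.diagonal (fun i => if μ i = c then (1:ℝ) else 0) * W) = 0 := by
    intro c
    set E := Matrix.diagonal (fun i => if μ i = c then (1:ℝ) else 0) with hE
    have hcomm : W * E = E * W := by
      ext i j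
      rw [hE, Matrix.mul_diagonal, Matrix.diagonal_mul]
      by_cases h1 : μ j = c <;> by_cases h2 : μ i = c <;> simp [h1, h2]
      · exact hW0 i j (fun hh => h2 (hh.trans h1))
      · exact (hW0 i j (fun hh => h1 (hh.symm.trans h2))).symm
    have hcommE : Commute E W := hcomm.symm
    have hEE : E * E = E := by
      have h2 : (fun i => (if μ i = c then (1:ℝ) else 0) * (if μ i = c then (1:ℝ) else 0))
          = fun i => if μ i = c then (1:ℝ) else 0 := by
        funext i; split_ifs <;> simp
      rw [hE, Matrix.diagonal_mul_diagonal, h2]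
    have hEW : ∀ k : ℕ, (E * W) ^ (k+1) = E * W ^ (k+1) := by
      intro k
      induction k with
      | zero => simp
      | succ m ih =>
        calc (E * W) ^ (m+1+1) = (E * W) ^ (m+1) * (E * W) := pow_succ _ _
          _ = E * (W ^ (m+1) * E) * W := by rw [ih]; noncomm_ring
          _ = E * (E * W ^ (m+1)) * W := by rw [(hcommE.pow_right (m+1)).eq]
          _ = (E * E) * (W ^ (m+1) * W) := by noncomm_ring
          _ = E * W ^ (m+1+1) := by rw [hEE, ← pow_succ]
    have hsumW := NormedSpace.expSeries_summable' (𝕂 := ℝ) W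
    have hsumEW := NormedSpace.expSeries_summable' (𝕂 := ℝ) (E * W)
    have htail : ∑' k : ℕ, ((((k+1).factorial : ℝ))⁻¹) • W ^ (k+1) = 0 := by
      have h0 : exp W = ((((0:ℕ).factorial : ℝ))⁻¹) • W ^ 0
          + ∑' k : ℕ, ((((k+1).factorial : ℝ))⁻¹) • W ^ (k+1) := by
        rw [NormedSpace.exp_eq_tsum ℝ]
        exact Summable.tsum_eq_zero_add hsumW
      rw [hexpW] at h0
      simp only [pow_zero, Nat.factorial_zero, Nat.cast_one, inv_one, one_smul] at h0
      exact (left_eq_add.mp h0)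
    have hexpEW : exp (E * W) = 1 := by
      have e1 : exp (E * W) = ∑' k : ℕ, (((k.factorial : ℝ))⁻¹) • (E*W)^k :=
        congrFun (NormedSpace.exp_eq_tsum ℝ) (E * W)
      have e3 : ∑' k : ℕ, (((k.factorial : ℝ))⁻¹) • (E*W)^k = ((((0:ℕ).factorial : ℝ))⁻¹) • (E*W) ^ 0
          + ∑' k : ℕ, ((((k+1).factorial : ℝ))⁻¹) • (E*W) ^ (k+1) := Summable.tsum_eq_zero_add hsumEW
      rw [e1, e3]
      have e2 : ∀ k : ℕ, ((((k+1).factorial : ℝ))⁻¹) • (E*W) ^ (k+1)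
          = E * (((((k+1).factorial : ℝ))⁻¹) • W ^ (k+1)) := by
        intro k; rw [hEW k, mul_smul_comm]
      simp only [e2]
      have e4 : ∑' k : ℕ, E * (((((k+1).factorial : ℝ))⁻¹) • W ^ (k+1))
          = E * ∑' k : ℕ, ((((k+1).factorial : ℝ))⁻¹) • W ^ (k+1) :=
        Summable.tsum_mul_left E ((summable_nat_add_iff 1).mpr hsumW)
      rw [e4, htail]
      simp
    exact trace_eq_zero_of_exp_eq_one (E * W) hexpEW
  have lhs : Matrix.trace (Matrix.diagonal μ * W) = ∑ i, μ i * W i i := by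
    simp [Matrix.trace, Matrix.diag, Matrix.diagonal_mul]
  have rhs : ∀ c : ℝ, c * Matrix.trace (Matrix.diagonal (fun i => if μ i = c then (1:ℝ) else 0) * W)
      = ∑ i, if μ i = c then μ i * W i i else 0 := by
    intro c
    have h3 : Matrix.trace (Matrix.diagonal (fun i => if μ i = c then (1:ℝ) else 0) * W)
        = ∑ i, if μ i = c then W i i else 0 := by
      simp [Matrix.trace, Matrix.diag, Matrix.diagonal_mul, ite_mul]
    rw [h3, Finset.mul_sum]
    refine Finset.sum_congr rfl fun i _ => ?_
    by_cases h : μ i = c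
    · rw [if_pos h, if_pos h, h]
    · simp [h]
  have hagg : Matrix.trace (Matrix.diagonal μ * W)
      = ∑ c ∈ Finset.image μ Finset.univ, c *
        Matrix.trace (Matrix.diagonal (fun i => if μ i = c then (1:ℝ) else 0) * W) := by
    rw [lhs]
    rw [Finset.sum_congr rfl (fun c _ => rhs c)]
    rw [Finset.sum_comm]
    refine Finset.sum_congr rfl fun i _ => ?_
    have : ∀ c ∈ Finset.image μ Finset.univ, (if μ i = c then μ i * W i i else 0)
        = (if μ i = c then (fun _ : ℝ => μ i * W i i) c else 0) := fun c _ => rfl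
    rw [Finset.sum_congr rfl this, Finset.sum_ite_eq (Finset.image μ Finset.univ) (μ i)]
    rw [if_pos (Finset.mem_image_of_mem μ (Finset.mem_univ i))]
  rw [hagg]
  exact Finset.sum_eq_zero fun c _ => by rw [key c, mul_zero]

private theorem aeval_diagonal {N : ℕ} (q : Polynomial ℝ) (v : Fin N → ℝ) :
    Polynomial.aeval (Matrix.diagonal v) q = Matrix.diagonal (fun i => q.eval (v i)) := by
  rw [Polynomial.aeval_eq_sum_range]
  have h1 : ∀ k : ℕ, q.coeff k • Matrix.diagonal v ^ k
      = Matrix.diagonal (q.coeff k • v ^ k) := by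
    intro k; rw [Matrix.diagonal_pow, Matrix.diagonal_smul]
  rw [Finset.sum_congr rfl (fun k _ => h1 k)]
  calc ∑ k ∈ Finset.range (q.natDegree + 1), Matrix.diagonal (q.coeff k • v ^ k)
      = Matrix.diagonal (∑ k ∈ Finset.range (q.natDegree + 1), q.coeff k • v ^ k) :=
        (map_sum (Matrix.diagonalAddMonoidHom (Fin N) ℝ) _ _).symm
    _ = Matrix.diagonal fun i => q.eval (v i) := by
        apply congrArg Matrix.diagonal
        funext i
        rw [Polynomial.eval_eq_sum_range]
        simp [Finset.sum_apply]

end Stmt6Helpers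

open NormedSpace Polynomial in
/-- Among all real matrix logarithms X of a symmetric positive definite matrix P = exp X,
the principal (symmetric) logarithm S has minimal Frobenius norm: ‖X‖² ≥ ‖S‖². -/
theorem stmt6 (n : ℕ) (X S : Matrix (Fin n) (Fin n) ℝ)
    (hPsym : (NormedSpace.exp X)ᵀ = NormedSpace.exp X)
    (hPpos : (NormedSpace.exp X).PosDef)
    (hSsym : Sᵀ = S) (hS : NormedSpace.exp S = NormedSpace.exp X) :
    frobSq S ≤ frobSq X := by
  classical
  have hSherm : S.IsHermitian := by
    rw [Matrix.IsHermitian, Matrix.conjTranspose_eq_transpose_of_trivial]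
    exact hSsym
  set μ : Fin n → ℝ := hSherm.eigenvalues with hμ
  set U : Matrix (Fin n) (Fin n) ℝ := ↑hSherm.eigenvectorUnitary with hUdef
  set u : (Matrix (Fin n) (Fin n) ℝ)ˣ := Unitary.toUnits hSherm.eigenvectorUnitary with hu
  have hcu : (u : Matrix (Fin n) (Fin n) ℝ) = U := rfl
  have hmem := hSherm.eigenvectorUnitary.2
  have hUU : U * star U = 1 := (Matrix.mem_unitaryGroup_iff).mp hmem
  have hU'U : star U * U = 1 := (Matrix.mem_unitaryGroup_iff').mp hmem
  have hcuinv : ((u⁻¹ : (Matrix (Fin n) (Fin n) ℝ)ˣ) : Matrix (Fin n) (Fin n) ℝ) = star U :=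
    Units.inv_eq_of_mul_eq_one_right hUU
  have hSdec : S = ((u : (Matrix (Fin n) (Fin n) ℝ)ˣ) : Matrix (Fin n) (Fin n) ℝ) * Matrix.diagonal μ * ((u⁻¹ : (Matrix (Fin n) (Fin n) ℝ)ˣ) : Matrix (Fin n) (Fin n) ℝ) := by
    rw [hcu, hcuinv]
    have h := hSherm.spectral_theorem
    rw [RCLike.ofReal_real_eq_id] at h
    simpa using h
  -- exponential of S
  have hexpD : NormedSpace.exp (Matrix.diagonal μ)
      = Matrix.diagonal (fun i => Real.exp (μ i)) := by
    have hfun : (exp μ) = fun i => Real.exp (μ i) := by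
      funext i; rw [Pi.coe_exp, Real.exp_eq_exp_ℝ]
    rw [Matrix.exp_diagonal, hfun]
  have hexpS : NormedSpace.exp S
      = ((u : (Matrix (Fin n) (Fin n) ℝ)ˣ) : Matrix (Fin n) (Fin n) ℝ) * Matrix.diagonal (fun i => Real.exp (μ i)) * ((u⁻¹ : (Matrix (Fin n) (Fin n) ℝ)ˣ) : Matrix (Fin n) (Fin n) ℝ) := by
    rw [hSdec, Matrix.exp_units_conj, hexpD]
  -- Lagrange interpolation: S is a polynomial in exp X
  set sfin : Finset ℝ := Finset.image (fun i => Real.exp (μ i)) Finset.univ with hsfin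
  set p : Polynomial ℝ := Lagrange.interpolate sfin id Real.log with hpdef
  have hpeval : ∀ i, p.eval (Real.exp (μ i)) = μ i := by
    intro i
    have hmem' : Real.exp (μ i) ∈ sfin := Finset.mem_image_of_mem _ (Finset.mem_univ i)
    have h := Lagrange.eval_interpolate_at_node Real.log (Set.injOn_id _) hmem'
    simpa [hpdef] using h
  have haevalD : Polynomial.aeval (Matrix.diagonal (fun i => Real.exp (μ i))) p
      = Matrix.diagonal μ := by
    rw [aeval_diagonal]
    exact congrArg Matrix.diagonal (funext fun i => hpeval i)
  have haevalP : Polynomial.aeval (NormedSpace.exp X) p = S := by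
    have hPS : NormedSpace.exp X
        = ((u : (Matrix (Fin n) (Fin n) ℝ)ˣ) : Matrix (Fin n) (Fin n) ℝ) * Matrix.diagonal (fun i => Real.exp (μ i)) * ((u⁻¹ : (Matrix (Fin n) (Fin n) ℝ)ˣ) : Matrix (Fin n) (Fin n) ℝ) := by rw [← hS, hexpS]
    rw [hPS, Polynomial.aeval_eq_sum_range]
    have hterm : ∀ k : ℕ, p.coeff k •
        (((u : (Matrix (Fin n) (Fin n) ℝ)ˣ) : Matrix (Fin n) (Fin n) ℝ)
          * Matrix.diagonal (fun i => Real.exp (μ i))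
          * ((u⁻¹ : (Matrix (Fin n) (Fin n) ℝ)ˣ) : Matrix (Fin n) (Fin n) ℝ)) ^ k
        = ((u : (Matrix (Fin n) (Fin n) ℝ)ˣ) : Matrix (Fin n) (Fin n) ℝ)
          * (p.coeff k • (Matrix.diagonal (fun i => Real.exp (μ i))) ^ k)
          * ((u⁻¹ : (Matrix (Fin n) (Fin n) ℝ)ˣ) : Matrix (Fin n) (Fin n) ℝ) := by
      intro k
      rw [Units.conj_pow, mul_smul_comm, smul_mul_assoc]
    rw [Finset.sum_congr rfl (fun k _ => hterm k), ← Finset.sum_mul, ← Finset.mul_sum,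
      ← Polynomial.aeval_eq_sum_range (p := p) (Matrix.diagonal (fun i => Real.exp (μ i))),
      haevalD, ← hSdec]
  have hXP : Commute X (NormedSpace.exp X) := (Commute.refl X).exp_right
  have hXS : Commute X S := by
    rw [← haevalP, Polynomial.aeval_eq_sum_range]
    exact Commute.sum_right _ _ _ (fun k _ => ((hXP.pow_right k).smul_right _))
  have hSZ : Commute S (X - S) := (hXS.symm).sub_right (Commute.refl S)
  have hexpZ : NormedSpace.exp (X - S) = 1 := by
    have h1 : NormedSpace.exp ((X - S) + S)
        = NormedSpace.exp (X - S) * NormedSpace.exp S :=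
      Matrix.exp_add_of_commute _ _ hSZ.symm
    rw [sub_add_cancel] at h1
    rw [← hS] at h1
    have hunit : IsUnit (NormedSpace.exp S) := Matrix.isUnit_exp S
    have h2 : NormedSpace.exp (X - S) * NormedSpace.exp S
        = 1 * NormedSpace.exp S := by rw [← h1, one_mul]
    exact hunit.mul_right_cancel h2
  set Z : Matrix (Fin n) (Fin n) ℝ := X - S with hZ
  set W : Matrix (Fin n) (Fin n) ℝ := star U * Z * U with hW
  have hexpW : NormedSpace.exp W = 1 := by
    have hWc : W = ((u⁻¹ : (Matrix (Fin n) (Fin n) ℝ)ˣ) : Matrix (Fin n) (Fin n) ℝ) * Z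
        * (((u⁻¹)⁻¹ : (Matrix (Fin n) (Fin n) ℝ)ˣ) : Matrix (Fin n) (Fin n) ℝ) := by
      rw [inv_inv, hcuinv, hcu, hW]
    rw [hWc, Matrix.exp_units_conj, hexpZ, mul_one, ← Units.val_mul, inv_inv, inv_mul_cancel]
    rfl
  have hZdec : Z = ((u : (Matrix (Fin n) (Fin n) ℝ)ˣ) : Matrix (Fin n) (Fin n) ℝ) * W * ((u⁻¹ : (Matrix (Fin n) (Fin n) ℝ)ˣ) : Matrix (Fin n) (Fin n) ℝ) := by
    rw [hW, hcu, hcuinv]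
    calc Z = (U * star U) * Z * (U * star U) := by rw [hUU, one_mul, mul_one]
      _ = U * (star U * Z * U) * star U := by noncomm_ring
  have hSZcomm : S * Z = Z * S := hSZ.eq
  have hD : Matrix.diagonal μ = star U * S * U := by
    rw [hSdec, hcu, hcuinv]
    have : star U * (U * Matrix.diagonal μ * star U) * U
        = (star U * U) * Matrix.diagonal μ * (star U * U) := by noncomm_ring
    rw [this, hU'U, one_mul, mul_one]
  have hDW : Matrix.diagonal μ * W = W * Matrix.diagonal μ := by
    rw [hD, hW]
    calc star U * S * U * (star U * Z * U)
        = star U * S * (U * star U) * Z * U := by noncomm_ring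
      _ = star U * (S * Z) * U := by rw [hUU]; noncomm_ring
      _ = star U * (Z * S) * U := by rw [hSZcomm]
      _ = star U * Z * (U * star U) * S * U := by rw [hUU]; noncomm_ring
      _ = star U * Z * U * (star U * S * U) := by noncomm_ring
  have hW0 : ∀ i j, μ i ≠ μ j → W i j = 0 := by
    intro i j hij
    have h1 := congrFun (congrFun hDW i) j
    rw [Matrix.diagonal_mul, Matrix.mul_diagonal] at h1
    have h2 : (μ i - μ j) * W i j = 0 := by
      have : μ i * W i j = W i j * μ j := h1
      ring_nf
      ring_nf at this
      linarith [this]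
    rcases mul_eq_zero.mp h2 with h | h
    · exact absurd (sub_eq_zero.mp h) hij
    · exact h
  have htrDW := trace_diag_mul_eq_zero μ W hW0 hexpW
  have htrSZ : Matrix.trace (S * Z) = 0 := by
    have hconj : S * Z = ((u : (Matrix (Fin n) (Fin n) ℝ)ˣ) : Matrix (Fin n) (Fin n) ℝ) * (Matrix.diagonal μ * W) * ((u⁻¹ : (Matrix (Fin n) (Fin n) ℝ)ˣ) : Matrix (Fin n) (Fin n) ℝ) := by
      rw [hSdec, hZdec]
      calc (((u : (Matrix (Fin n) (Fin n) ℝ)ˣ) : Matrix (Fin n) (Fin n) ℝ) * Matrix.diagonal μ * ((u⁻¹ : (Matrix (Fin n) (Fin n) ℝ)ˣ) : Matrix (Fin n) (Fin n) ℝ)) * (((u : (Matrix (Fin n) (Fin n) ℝ)ˣ) : Matrix (Fin n) (Fin n) ℝ) * W * ((u⁻¹ : (Matrix (Fin n) (Fin n) ℝ)ˣ) : Matrix (Fin n) (Fin n) ℝ))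
          = ((u : (Matrix (Fin n) (Fin n) ℝ)ˣ) : Matrix (Fin n) (Fin n) ℝ) * Matrix.diagonal μ * (((u⁻¹ : (Matrix (Fin n) (Fin n) ℝ)ˣ) : Matrix (Fin n) (Fin n) ℝ) * ((u : (Matrix (Fin n) (Fin n) ℝ)ˣ) : Matrix (Fin n) (Fin n) ℝ)) * W * ((u⁻¹ : (Matrix (Fin n) (Fin n) ℝ)ˣ) : Matrix (Fin n) (Fin n) ℝ) := by noncomm_ring
        _ = ((u : (Matrix (Fin n) (Fin n) ℝ)ˣ) : Matrix (Fin n) (Fin n) ℝ) * (Matrix.diagonal μ * W) * ((u⁻¹ : (Matrix (Fin n) (Fin n) ℝ)ˣ) : Matrix (Fin n) (Fin n) ℝ) := by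
            rw [← Units.val_mul, inv_mul_cancel]
            show ((u : (Matrix (Fin n) (Fin n) ℝ)ˣ) : Matrix (Fin n) (Fin n) ℝ) * Matrix.diagonal μ * (1 : Matrix (Fin n) (Fin n) ℝ) * W * ((u⁻¹ : (Matrix (Fin n) (Fin n) ℝ)ˣ) : Matrix (Fin n) (Fin n) ℝ) = _
            noncomm_ring
    rw [hconj, Matrix.trace_mul_comm, ← mul_assoc, ← Units.val_mul, inv_mul_cancel]
    show Matrix.trace ((1 : Matrix (Fin n) (Fin n) ℝ) * (Matrix.diagonal μ * W)) = 0
    rw [one_mul, htrDW]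
  have hXdec : X = S + Z := by rw [hZ]; abel
  have hfrob : frobSq X = frobSq S + (Matrix.trace (Sᵀ * Z) + Matrix.trace (Zᵀ * S)) + frobSq Z := by
    rw [hXdec]
    simp only [frobSq, Matrix.transpose_add, Matrix.add_mul, Matrix.mul_add, Matrix.trace_add]
    ring
  have h1 : Matrix.trace (Sᵀ * Z) = 0 := by rw [hSsym]; exact htrSZ
  have h2 : Matrix.trace (Zᵀ * S) = 0 := by
    have h3 : Matrix.trace ((Zᵀ * S)ᵀ) = Matrix.trace (Zᵀ * S) := Matrix.trace_transpose _
    rw [← h3, Matrix.transpose_mul, Matrix.transpose_transpose, hSsym]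
    exact htrSZ
  have h4 : 0 ≤ frobSq Z := by
    unfold frobSq
    rw [Matrix.trace]
    apply Finset.sum_nonneg
    intro j _
    rw [Matrix.diag]
    rw [Matrix.mul_apply]
    apply Finset.sum_nonneg
    intro i _
    rw [Matrix.transpose_apply]
    exact mul_self_nonneg _
  rw [hfrob, h1, h2]
  linarith
end

section
/- Let μ, μ_c > 0 and let ξ ∈ ℝ^{n×n}. Define γ(t) = F · exp(t(sym ξ − (μ_c/μ) skew ξ)) · exp(t(1 + μ_c/μ) skew ξ) for F ∈ GL⁺(n,ℝ). Then γ(t) ∈ GL⁺(n,ℝ) for all t ∈ ℝ, γ(0) = F, and γ'(t) = γ(t) · Ad_{exp(−t(1+μ_c/μ) skew ξ)}(sym ξ − (μ_c/μ) skew ξ) + γ(t)·(1+μ_c/μ) skew ξ evaluated appropriately; in particular γ'(0) = F·ξ. -/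
open Matrix

attribute [local instance] Matrix.frobeniusNormedAddCommGroup Matrix.frobeniusNormedRing Matrix.frobeniusNormedSpace

attribute [local instance] Matrix.frobeniusNormedAlgebra

theorem det_exp_pos {n : ℕ} (M : Matrix (Fin n) (Fin n) ℝ) :
    0 < (NormedSpace.exp M).det := by
  have h2 : NormedSpace.exp M =
      NormedSpace.exp ((1 / 2 : ℝ) • M) * NormedSpace.exp ((1 / 2 : ℝ) • M) := by
    rw [← Matrix.exp_add_of_commute _ _ (Commute.refl _)]
    congr 1
    module
  have hu : IsUnit (NormedSpace.exp ((1 / 2 : ℝ) • M)) := Matrix.isUnit_exp _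
  have hne : (NormedSpace.exp ((1 / 2 : ℝ) • M)).det ≠ 0 :=
    ((Matrix.isUnit_iff_isUnit_det _).mp hu).ne_zero
  rw [h2, Matrix.det_mul]
  exact mul_self_pos.mpr hne

/-- The geodesic curve γ(t) = F exp(t(sym ξ − (μc/μ) skew ξ)) exp(t(1+μc/μ) skew ξ) stays
in GL⁺(n), starts at F, has velocity
γ'(t) = γ(t)·(Ad_{exp(−t(1+μc/μ) skew ξ)}(sym ξ − (μc/μ) skew ξ) + (1+μc/μ) skew ξ),
and in particular γ'(0) = F·ξ. -/
theorem stmt9 (n : ℕ) (μ μc : ℝ) (hμ : 0 < μ) (hμc : 0 < μc)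
    (F ξ : Matrix (Fin n) (Fin n) ℝ) (hF : 0 < F.det)
    (γ : ℝ → Matrix (Fin n) (Fin n) ℝ)
    (hγ : γ = fun t => F * NormedSpace.exp (t • (symPart ξ - (μc / μ) • skewPart ξ)) *
        NormedSpace.exp (t • ((1 + μc / μ) • skewPart ξ))) :
    (∀ t : ℝ, 0 < (γ t).det) ∧ γ 0 = F ∧
    (∀ t : ℝ, HasDerivAt γ
      (γ t * (NormedSpace.exp (-(t • ((1 + μc / μ) • skewPart ξ))) *
          (symPart ξ - (μc / μ) • skewPart ξ) *
          NormedSpace.exp (t • ((1 + μc / μ) • skewPart ξ)) +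
        (1 + μc / μ) • skewPart ξ)) t) ∧
    HasDerivAt γ (F * ξ) 0 := by
  set A := symPart ξ - (μc / μ) • skewPart ξ with hA
  set B := (1 + μc / μ) • skewPart ξ with hB
  have hAB : A + B = ξ := by
    rw [hA, hB]; unfold symPart skewPart; module
  have key : ∀ t : ℝ, NormedSpace.exp (t • B) * NormedSpace.exp (-(t • B)) = 1 := by
    intro t
    rw [← Matrix.exp_add_of_commute _ _ ((Commute.refl (t • B)).neg_right),
      add_neg_cancel, NormedSpace.exp_zero]
  have hderiv : ∀ t : ℝ, HasDerivAt γ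
      (F * (NormedSpace.exp (t • A) * A) * NormedSpace.exp (t • B) +
        F * NormedSpace.exp (t • A) * (NormedSpace.exp (t • B) * B)) t := by
    intro t
    rw [hγ]
    exact ((hasDerivAt_exp_smul_const A t).const_mul F).mul (hasDerivAt_exp_smul_const B t)
  have heq : ∀ t : ℝ,
      γ t * (NormedSpace.exp (-(t • B)) * A * NormedSpace.exp (t • B) + B) =
      F * (NormedSpace.exp (t • A) * A) * NormedSpace.exp (t • B) +
        F * NormedSpace.exp (t • A) * (NormedSpace.exp (t • B) * B) := by
    intro t
    rw [hγ]
    simp only [mul_add]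
    congr 1
    · simp only [mul_assoc]
      rw [← mul_assoc (NormedSpace.exp (t • B)) (NormedSpace.exp (-(t • B))), key t, one_mul]
    · rw [mul_assoc]
  refine ⟨?_, ?_, fun t => (heq t) ▸ hderiv t, ?_⟩
  · intro t
    rw [hγ]
    simp only [Matrix.det_mul]
    exact mul_pos (mul_pos hF (det_exp_pos _)) (det_exp_pos _)
  · rw [hγ]
    simp [NormedSpace.exp_zero]
  · have h0 := hderiv 0
    simpa [NormedSpace.exp_zero, ← mul_add, hAB] using h0
end

section
/- For F ∈ GL⁺(n,ℝ) with polar decomposition F = R·U, the Euclidean distance satisfies dist²_euclid(F, SO(n)) = ‖U − Id‖² = Σᵢ (λᵢ − 1)², where λᵢ > 0 are the eigenvalues (singular values of F) of U. -/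
open Matrix

/-- diagonal entries of an orthogonal matrix are at most 1. -/
lemma orth_diag_le_one {n : ℕ} {M : Matrix (Fin n) (Fin n) ℝ}
    (hM : Mᵀ * M = 1) (i : Fin n) : M i i ≤ 1 := by
  have hcol : ∑ j, (M j i) ^ 2 = 1 := by
    have := congrFun (congrFun hM i) i
    simpa [Matrix.mul_apply, Matrix.one_apply, sq] using this
  have h1 : (M i i) ^ 2 ≤ 1 := by
    rw [← hcol]
    exact Finset.single_le_sum (fun j _ => sq_nonneg (M j i)) (Finset.mem_univ i)
  nlinarith [sq_nonneg (M i i - 1)]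

/-- real spectral theorem with transposes. -/
lemma spectral_real {n : ℕ} {U : Matrix (Fin n) (Fin n) ℝ} (hU : U.IsHermitian) :
    U = (hU.eigenvectorUnitary : Matrix (Fin n) (Fin n) ℝ) * diagonal hU.eigenvalues *
      (hU.eigenvectorUnitary : Matrix (Fin n) (Fin n) ℝ)ᵀ := by
  have := hU.spectral_theorem
  simpa [Function.comp, Matrix.star_eq_conjTranspose, conjTranspose_eq_transpose_of_trivial] using this

lemma eigVT_mul {n : ℕ} {U : Matrix (Fin n) (Fin n) ℝ} (hU : U.IsHermitian) :
    ((hU.eigenvectorUnitary : Matrix (Fin n) (Fin n) ℝ))ᵀ *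
      (hU.eigenvectorUnitary : Matrix (Fin n) (Fin n) ℝ) = 1 := by
  have h := hU.eigenvectorUnitary.2
  have := (Matrix.mem_unitaryGroup_iff'.mp h)
  simpa [star, conjTranspose] using this

/-- key inequality: trace (S * U) ≤ trace U for S orthogonal and U positive (semi)definite. -/
lemma trace_mul_le_trace {n : ℕ} {S U : Matrix (Fin n) (Fin n) ℝ}
    (hS : Sᵀ * S = 1) (hU : U.IsHermitian) (hpos : ∀ i, 0 ≤ hU.eigenvalues i) :
    Matrix.trace (S * U) ≤ Matrix.trace U := by
  set V : Matrix (Fin n) (Fin n) ℝ := (hU.eigenvectorUnitary : Matrix (Fin n) (Fin n) ℝ) with hV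
  have hVo : Vᵀ * V = 1 := eigVT_mul hU
  have hVo' : V * Vᵀ = 1 := mul_eq_one_comm.mp hVo
  set D := diagonal hU.eigenvalues with hD
  have hspec : U = V * D * Vᵀ := spectral_real hU
  set M : Matrix (Fin n) (Fin n) ℝ := Vᵀ * S * V with hM
  have hMo : Mᵀ * M = 1 := by
    have h1 : Mᵀ * M = Vᵀ * (Sᵀ * ((V * Vᵀ) * (S * V))) := by
      simp [hM, Matrix.transpose_mul, Matrix.mul_assoc]
    rw [h1, hVo', Matrix.one_mul, ← Matrix.mul_assoc Sᵀ, hS, Matrix.one_mul, hVo]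
  have h1 : Matrix.trace (S * U) = Matrix.trace (M * D) := by
    rw [hspec, hM]
    rw [show S * (V * D * Vᵀ) = (S * V * D) * Vᵀ by simp [Matrix.mul_assoc],
      Matrix.trace_mul_comm, ← Matrix.mul_assoc, ← Matrix.mul_assoc]
  have h2 : Matrix.trace U = Matrix.trace D := by
    rw [hspec, Matrix.trace_mul_comm, ← Matrix.mul_assoc, hVo, Matrix.one_mul]
  rw [h1, h2]
  have : Matrix.trace (M * D) = ∑ i, M i i * hU.eigenvalues i := by
    simp [Matrix.trace, Matrix.diag, Matrix.mul_apply, hD, Matrix.diagonal,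
      Finset.sum_ite_eq, Finset.mem_univ]
  rw [this]
  have hDtr : Matrix.trace D = ∑ i, hU.eigenvalues i := by simp [hD, Matrix.trace, Matrix.diag]
  rw [hDtr]
  apply Finset.sum_le_sum
  intro i _
  have := orth_diag_le_one hMo i
  nlinarith [hpos i]

lemma frobSq_expand {n : ℕ} (A B : Matrix (Fin n) (Fin n) ℝ) :
    frobSq (A - B) = Matrix.trace (Aᵀ * A) - 2 * Matrix.trace (Bᵀ * A) +
      Matrix.trace (Bᵀ * B) := by
  have h : Matrix.trace (Aᵀ * B) = Matrix.trace (Bᵀ * A) := by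
    rw [← Matrix.trace_transpose (Aᵀ * B), Matrix.transpose_mul, Matrix.transpose_transpose]
  simp only [frobSq, Matrix.transpose_sub, Matrix.sub_mul, Matrix.mul_sub, Matrix.trace_sub]
  rw [h]; ring

/-- dist²_euclid(F, SO(n)) = ‖U − 1‖² = Σᵢ (λᵢ − 1)² where λᵢ are the eigenvalues of U. -/
theorem stmt15 (n : ℕ) (F R U : Matrix (Fin n) (Fin n) ℝ)
    (hF : 0 < F.det) (hR : R ∈ SOn n)
    (hUherm : U.IsHermitian) (hUpos : U.PosDef) (hUsq : U * U = Fᵀ * F)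
    (hpolar : F = R * U) :
    IsLeast {v : ℝ | ∃ Q ∈ SOn n, v = frobSq (F - Q)} (frobSq (U - 1)) ∧
    frobSq (U - 1) = ∑ i : Fin n, (hUherm.eigenvalues i - 1) ^ 2 := by
  obtain ⟨hRo, hRdet⟩ := hR
  have hRo' : R * Rᵀ = 1 := mul_eq_one_comm.mp hRo
  have hUT : Uᵀ = U := by
    have := hUherm
    simpa [Matrix.IsHermitian, conjTranspose_eq_transpose_of_trivial] using this
  have hpos : ∀ i, 0 ≤ hUherm.eigenvalues i := fun i => (hUpos.eigenvalues_pos i).le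
  -- trace identities
  have htrRF : Matrix.trace (Rᵀ * F) = Matrix.trace U := by
    rw [hpolar, ← Matrix.mul_assoc, hRo, Matrix.one_mul]
  have htrFF : Matrix.trace (Fᵀ * F) = Matrix.trace (U * U) := by rw [hUsq]
  have htr1 : Matrix.trace (1 : Matrix (Fin n) (Fin n) ℝ) = (n : ℝ) := by simp
  have hU1 : frobSq (U - 1) =
      Matrix.trace (U * U) - 2 * Matrix.trace U + (n : ℝ) := by
    rw [frobSq_expand U 1]
    simp [hUT]
  -- eigen traces
  set V : Matrix (Fin n) (Fin n) ℝ := (hUherm.eigenvectorUnitary : Matrix (Fin n) (Fin n) ℝ)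
  have hVo : Vᵀ * V = 1 := eigVT_mul hUherm
  have hspec : U = V * diagonal hUherm.eigenvalues * Vᵀ := spectral_real hUherm
  have htrU : Matrix.trace U = ∑ i, hUherm.eigenvalues i := by
    conv_lhs => rw [hspec]
    rw [Matrix.trace_mul_comm, ← Matrix.mul_assoc, hVo, Matrix.one_mul]
    simp [Matrix.trace, Matrix.diag]
  have htrUU : Matrix.trace (U * U) = ∑ i, (hUherm.eigenvalues i) ^ 2 := by
    have h2 : U * U = V * (diagonal hUherm.eigenvalues * diagonal hUherm.eigenvalues) * Vᵀ := by
      conv_lhs => rw [hspec]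
      rw [show V * diagonal hUherm.eigenvalues * Vᵀ * (V * diagonal hUherm.eigenvalues * Vᵀ)
        = V * (diagonal hUherm.eigenvalues * ((Vᵀ * V) * (diagonal hUherm.eigenvalues * Vᵀ))) by
          simp [Matrix.mul_assoc]]
      rw [hVo, Matrix.one_mul, ← Matrix.mul_assoc (diagonal hUherm.eigenvalues),
        Matrix.diagonal_mul_diagonal, Matrix.mul_assoc]
    rw [h2, Matrix.trace_mul_comm, ← Matrix.mul_assoc, hVo, Matrix.one_mul,
      Matrix.diagonal_mul_diagonal]
    simp [Matrix.trace, Matrix.diag, sq]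
  constructor
  constructor
  · -- membership: Q = R
    refine ⟨R, ⟨hRo, hRdet⟩, ?_⟩
    rw [frobSq_expand F R, hU1, htrFF, htrRF, hRo, htr1]
  · -- lower bound
    rintro v ⟨Q, ⟨hQo, hQdet⟩, rfl⟩
    rw [frobSq_expand F Q, hU1, htrFF, hQo, htr1]
    have hkey : Matrix.trace (Qᵀ * F) ≤ Matrix.trace U := by
      have hQo' : Q * Qᵀ = 1 := mul_eq_one_comm.mp hQo
      have hSo : (Qᵀ * R)ᵀ * (Qᵀ * R) = 1 := by
        rw [Matrix.transpose_mul, Matrix.transpose_transpose,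
          show Rᵀ * Q * (Qᵀ * R) = Rᵀ * (Q * Qᵀ) * R by simp [Matrix.mul_assoc],
          hQo', Matrix.mul_one, hRo]
      have := trace_mul_le_trace hSo hUherm hpos
      rw [hpolar, ← Matrix.mul_assoc]
      exact this
    linarith
  · -- eigenvalue sum
    rw [hU1, htrU, htrUU]
    rw [Finset.sum_congr rfl (fun i _ => sub_sq (hUherm.eigenvalues i) 1)]
    simp [Finset.sum_add_distrib, Finset.sum_sub_distrib, Finset.mul_sum]
end

section
/- If φ : Ω → ℝⁿ is a C¹ map on a connected open set Ω ⊆ ℝⁿ such that ∇φ(x) ∈ SO(n) for every x ∈ Ω, then ∇φ is constant; hence φ(x) = Q·x + b for a fixed rotation Q ∈ SO(n) and vector b (Liouville-type rigidity for smooth maps). -/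
open RealInnerProductSpace Metric Set Filter Topology

namespace Stmt17Aux

variable {n : ℕ}

lemma norm_map_eq (T : EuclideanSpace ℝ (Fin n) →L[ℝ] EuclideanSpace ℝ (Fin n))
    (h : ∀ v w : EuclideanSpace ℝ (Fin n), ⟪T v, T w⟫ = ⟪v, w⟫)
    (v : EuclideanSpace ℝ (Fin n)) : ‖T v‖ = ‖v‖ := by
  have h1 : ‖T v‖ ^ 2 = ‖v‖ ^ 2 := by
    rw [← real_inner_self_eq_norm_sq, ← real_inner_self_eq_norm_sq, h]
  exact (sq_eq_sq₀ (norm_nonneg _) (norm_nonneg _)).mp h1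

lemma opNorm_le_one (T : EuclideanSpace ℝ (Fin n) →L[ℝ] EuclideanSpace ℝ (Fin n))
    (h : ∀ v w : EuclideanSpace ℝ (Fin n), ⟪T v, T w⟫ = ⟪v, w⟫) : ‖T‖ ≤ 1 :=
  T.opNorm_le_bound zero_le_one fun v => by rw [norm_map_eq T h, one_mul]

/-- Main local lemma: near every point of `Ω`, `φ` coincides with the affine map
built from its derivative at that point. -/
lemma local_affine {Ω : Set (EuclideanSpace ℝ (Fin n))} (hΩo : IsOpen Ω)
    {φ : EuclideanSpace ℝ (Fin n) → EuclideanSpace ℝ (Fin n)}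
    (hφ : ContDiffOn ℝ 1 φ Ω)
    (hSO : ∀ x ∈ Ω,
      (∀ v w : EuclideanSpace ℝ (Fin n), ⟪fderiv ℝ φ x v, fderiv ℝ φ x w⟫ = ⟪v, w⟫) ∧
      LinearMap.det ((fderiv ℝ φ x : EuclideanSpace ℝ (Fin n) →L[ℝ] EuclideanSpace ℝ (Fin n)) :
        EuclideanSpace ℝ (Fin n) →ₗ[ℝ] EuclideanSpace ℝ (Fin n)) = 1)
    {x : EuclideanSpace ℝ (Fin n)} (hx : x ∈ Ω) :
    ∃ r > 0, ball x r ⊆ Ω ∧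
      ∀ y ∈ ball x r, φ y = φ x + fderiv ℝ φ x (y - x) := by
  classical
  -- differentiability at every point of Ω
  have hdAt : ∀ y ∈ Ω, HasFDerivAt φ (fderiv ℝ φ y) y := fun y hy =>
    ((hφ.contDiffAt (hΩo.mem_nhds hy)).differentiableAt one_ne_zero).hasFDerivAt
  have hnorm : ∀ y ∈ Ω, ∀ v, ‖fderiv ℝ φ y v‖ = ‖v‖ := fun y hy =>
    norm_map_eq _ (hSO y hy).1
  have hop : ∀ y ∈ Ω, ‖fderiv ℝ φ y‖ ≤ 1 := fun y hy =>
    opNorm_le_one _ (hSO y hy).1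
  -- equivalences
  have hequiv : ∀ y ∈ Ω, ∃ e : EuclideanSpace ℝ (Fin n) ≃L[ℝ] EuclideanSpace ℝ (Fin n),
      (e : EuclideanSpace ℝ (Fin n) →L[ℝ] EuclideanSpace ℝ (Fin n)) = fderiv ℝ φ y := by
    intro y hy
    have hdet : (fderiv ℝ φ y).det ≠ 0 := by
      have := (hSO y hy).2
      simp only [ContinuousLinearMap.det]
      rw [this]; exact one_ne_zero
    exact ⟨(fderiv ℝ φ y).toContinuousLinearEquivOfDetNeZero hdet,
      ContinuousLinearMap.coe_toContinuousLinearEquivOfDetNeZero _ _⟩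
  -- upper bound on convex subsets of Ω
  have upper : ∀ s ⊆ Ω, Convex ℝ s → ∀ y ∈ s, ∀ z ∈ s, ‖φ y - φ z‖ ≤ ‖y - z‖ := by
    intro s hs hconv y hy z hz
    have := hconv.norm_image_sub_le_of_norm_hasFDerivWithin_le
      (fun a ha => (hdAt a (hs ha)).hasFDerivWithinAt)
      (fun a ha => hop a (hs ha)) hz hy
    simpa using this
  -- inverse function theorem
  obtain ⟨e, he⟩ := hequiv x hx
  have hstrict : HasStrictFDerivAt φ
      (e : EuclideanSpace ℝ (Fin n) →L[ℝ] EuclideanSpace ℝ (Fin n)) x := by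
    rw [he]
    exact (hφ.contDiffAt (hΩo.mem_nhds hx)).hasStrictFDerivAt one_ne_zero
  set f := (hstrict.toOpenPartialHomeomorph φ).restrOpen Ω hΩo with hf
  have hfcoe : (f : EuclideanSpace ℝ (Fin n) → EuclideanSpace ℝ (Fin n)) = φ := by
    rw [hf]
    exact hstrict.toOpenPartialHomeomorph_coe
  have hxsrc : x ∈ f.source := by
    rw [hf, OpenPartialHomeomorph.restrOpen_source]
    exact ⟨hstrict.mem_toOpenPartialHomeomorph_source, hx⟩
  have hsrcΩ : f.source ⊆ Ω := by
    rw [hf, OpenPartialHomeomorph.restrOpen_source]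
    exact inter_subset_right
  have hφxtgt : φ x ∈ f.target := by
    have := f.map_source hxsrc
    rwa [hfcoe] at this
  -- choose ρ with ball (φ x) ρ ⊆ f.target
  obtain ⟨ρ, hρ0, hρ⟩ := Metric.isOpen_iff.mp f.open_target _ hφxtgt
  -- derivative of the inverse on the target ball, and 1-Lipschitz bound
  have hsymm : ∀ a ∈ ball (φ x) ρ, ∀ b ∈ ball (φ x) ρ,
      ‖f.symm a - f.symm b‖ ≤ ‖a - b‖ := by
    have hkey : ∀ a ∈ ball (φ x) ρ,
        ∃ D : EuclideanSpace ℝ (Fin n) →L[ℝ] EuclideanSpace ℝ (Fin n),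
          HasFDerivAt f.symm D a ∧ ‖D‖ ≤ 1 := by
      intro a ha
      have hatgt : a ∈ f.target := hρ ha
      have hGasrc : f.symm a ∈ f.source := f.map_target hatgt
      have hGaΩ : f.symm a ∈ Ω := hsrcΩ hGasrc
      obtain ⟨ea, hea⟩ := hequiv _ hGaΩ
      have hda : HasFDerivAt f
          (ea : EuclideanSpace ℝ (Fin n) →L[ℝ] EuclideanSpace ℝ (Fin n)) (f.symm a) := by
        rw [hfcoe, hea]
        exact hdAt _ hGaΩ
      refine ⟨(ea.symm : EuclideanSpace ℝ (Fin n) →L[ℝ] EuclideanSpace ℝ (Fin n)),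
        f.hasFDerivAt_symm hatgt hda, ?_⟩
      refine ContinuousLinearMap.opNorm_le_bound _ zero_le_one fun v => ?_
      have h1 : ‖ea (ea.symm v)‖ = ‖ea.symm v‖ := by
        have : (ea : EuclideanSpace ℝ (Fin n) →L[ℝ] EuclideanSpace ℝ (Fin n)) (ea.symm v)
            = fderiv ℝ φ (f.symm a) (ea.symm v) := by rw [hea]
        calc ‖ea (ea.symm v)‖ = ‖fderiv ℝ φ (f.symm a) (ea.symm v)‖ := by
              rw [← this]; rfl
          _ = ‖ea.symm v‖ := hnorm _ hGaΩ _
      have h2 : ea (ea.symm v) = v := ea.apply_symm_apply v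
      rw [h2] at h1
      rw [one_mul]
      exact le_of_eq h1.symm
    choose D hD hDle using hkey
    intro a ha b hb
    have := (convex_ball (φ x) ρ).norm_image_sub_le_of_norm_hasFDerivWithin_le
      (f' := fun a => if h : a ∈ ball (φ x) ρ then D a h else 0)
      (fun c hc => by simp only [dif_pos hc]; exact (hD c hc).hasFDerivWithinAt)
      (fun c hc => by simp only [dif_pos hc]; exact hDle c hc) hb ha
    simpa using this
  -- choose r
  have hcont : ContinuousAt φ x := (hdAt x hx).continuousAt
  have hnhds : f.source ∩ φ ⁻¹' ball (φ x) ρ ∈ 𝓝 x :=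
    Filter.inter_mem (f.open_source.mem_nhds hxsrc)
      (hcont.preimage_mem_nhds (ball_mem_nhds _ hρ0))
  obtain ⟨r, hr0, hrsub⟩ := Metric.mem_nhds_iff.mp hnhds
  have hballsrc : ball x r ⊆ f.source := fun y hy => (hrsub hy).1
  have hballΩ : ball x r ⊆ Ω := fun y hy => hsrcΩ (hballsrc hy)
  have hballim : ∀ y ∈ ball x r, φ y ∈ ball (φ x) ρ := fun y hy => (hrsub hy).2
  -- isometry on ball x r
  have hiso : ∀ y ∈ ball x r, ∀ z ∈ ball x r, ‖φ y - φ z‖ = ‖y - z‖ := by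
    intro y hy z hz
    refine le_antisymm (upper _ hballΩ (convex_ball x r) y hy z hz) ?_
    have h1 : f.symm (φ y) = y := by
      have := f.left_inv (hballsrc hy); rwa [hfcoe] at this
    have h2 : f.symm (φ z) = z := by
      have := f.left_inv (hballsrc hz); rwa [hfcoe] at this
    have := hsymm (φ y) (hballim y hy) (φ z) (hballim z hz)
    rwa [h1, h2] at this
  have hxball : x ∈ ball x r := mem_ball_self hr0
  -- polarization: inner products preserved
  have hpol : ∀ a ∈ ball x r, ∀ b ∈ ball x r,
      ⟪φ a - φ x, φ b - φ x⟫ = ⟪a - x, b - x⟫ := by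
    intro a ha b hb
    have e1 : ‖φ a - φ x‖ = ‖a - x‖ := hiso a ha x hxball
    have e2 : ‖φ b - φ x‖ = ‖b - x‖ := hiso b hb x hxball
    have e3 : ‖φ a - φ b‖ = ‖a - b‖ := hiso a ha b hb
    have p1 := norm_sub_sq_real (φ a - φ x) (φ b - φ x)
    have p2 := norm_sub_sq_real (a - x) (b - x)
    have hab : φ a - φ x - (φ b - φ x) = φ a - φ b := by abel
    have hab2 : a - x - (b - x) = a - b := by abel
    rw [hab] at p1
    rw [hab2] at p2
    rw [e1, e2, e3] at p1
    linarith [p1, p2]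
  -- now the affine identity
  refine ⟨r, hr0, hballΩ, ?_⟩
  intro y hy
  set T := fderiv ℝ φ x with hT
  -- key inner product identity
  have hkey : ∀ w, ⟪φ y - φ x, T w⟫ = ⟪y - x, w⟫ := by
    intro w
    -- the curve t ↦ φ (x + t • w)
    have hcurve : HasDerivAt (fun t : ℝ => φ (x + t • w)) (T w) 0 := by
      have hl : HasDerivAt (fun t : ℝ => x + t • w) w 0 := by
        simpa using ((hasDerivAt_id (0 : ℝ)).smul_const w).const_add x
      have hx' : HasFDerivAt φ (fderiv ℝ φ x) ((fun t : ℝ => x + t • w) 0) := by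
        simpa using hdAt x hx
      have := hx'.comp_hasDerivAt (0 : ℝ) hl
      simpa [Function.comp_def, hT] using this
    have hslope := hasDerivAt_iff_tendsto_slope.mp hcurve
    -- inner with constant vector
    have htend : Tendsto (fun t : ℝ => ⟪φ y - φ x, slope (fun t : ℝ => φ (x + t • w)) 0 t⟫)
        (𝓝[≠] (0 : ℝ)) (𝓝 ⟪φ y - φ x, T w⟫) :=
      Filter.Tendsto.inner tendsto_const_nhds hslope
    -- eventually constant value
    have hev : ∀ᶠ t in 𝓝[≠] (0 : ℝ),
        ⟪φ y - φ x, slope (fun t : ℝ => φ (x + t • w)) 0 t⟫ = ⟪y - x, w⟫ := by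
      have hδ : (0 : ℝ) < r / (‖w‖ + 1) := by positivity
      have hball : ∀ᶠ t in nhds (0 : ℝ), |t| < r / (‖w‖ + 1) := by
        filter_upwards [Metric.ball_mem_nhds (0 : ℝ) hδ] with t ht
        simpa [Real.dist_eq] using ht
      filter_upwards [self_mem_nhdsWithin,
        eventually_nhdsWithin_of_eventually_nhds hball] with t ht h2
      have ht0 : t ≠ 0 := ht
      have htw : x + t • w ∈ ball x r := by
        rw [mem_ball, dist_eq_norm]
        have h1 : ‖x + t • w - x‖ = |t| * ‖w‖ := by
          simp [norm_smul, abs_eq_self.mpr, Real.norm_eq_abs]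
        rw [h1]
        have h3 : ‖w‖ < ‖w‖ + 1 := by linarith
        calc |t| * ‖w‖ ≤ |t| * (‖w‖ + 1) := by
              have := abs_nonneg t; nlinarith [norm_nonneg w]
          _ < (r / (‖w‖ + 1)) * (‖w‖ + 1) := by
              have h4 : (0 : ℝ) < ‖w‖ + 1 := by positivity
              nlinarith [abs_nonneg t]
          _ = r := by field_simp
      have hin := hpol y hy (x + t • w) htw
      have hsub : x + t • w - x = t • w := by abel
      rw [hsub] at hin
      rw [slope_def_module]
      simp only [sub_zero]
      rw [real_inner_smul_right]
      rw [show x + (0 : ℝ) • w = x by simp, hin, real_inner_smul_right]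
      field_simp
    have hconst : Tendsto (fun _ : ℝ => (⟪y - x, w⟫ : ℝ)) (𝓝[≠] (0 : ℝ)) (𝓝 ⟪y - x, w⟫) :=
      tendsto_const_nhds
    exact tendsto_nhds_unique (htend.congr' hev) hconst
  -- deduce the result
  have hd : ∀ w, ⟪φ y - φ x - T (y - x), T w⟫ = 0 := by
    intro w
    rw [inner_sub_left, hkey w, (hSO x hx).1 (y - x) w, sub_self]
  have hd0 : φ y - φ x - T (y - x) = 0 := by
    set d := φ y - φ x - T (y - x) with hdd
    have : ⟪d, d⟫ = (0 : ℝ) := by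
      have hsurj : ∃ w, T w = d := by
        refine ⟨e.symm d, ?_⟩
        have : (e : EuclideanSpace ℝ (Fin n) →L[ℝ] EuclideanSpace ℝ (Fin n)) (e.symm d)
            = T (e.symm d) := by rw [he, hT]
        rw [← this]
        exact e.apply_symm_apply d
      obtain ⟨w, hw⟩ := hsurj
      have := hd w
      rwa [hw] at this
    exact inner_self_eq_zero.mp this
  have : φ y - φ x - T (y - x) = 0 := hd0
  have := sub_eq_zero.mp this
  rw [sub_eq_iff_eq_add'] at this
  exact this

end Stmt17Aux

open RealInnerProductSpace

/-- Liouville-type rigidity: if φ : Ω → ℝⁿ is C¹ on a connected open set Ω and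
∇φ(x) ∈ SO(n) for every x ∈ Ω (i.e. ∇φ(x) preserves the inner product and has
determinant 1), then ∇φ is constant and φ(x) = Q·x + b for a fixed rotation Q. -/
theorem stmt17 (n : ℕ) (Ω : Set (EuclideanSpace ℝ (Fin n)))
    (hΩo : IsOpen Ω) (hΩc : IsConnected Ω)
    (φ : EuclideanSpace ℝ (Fin n) → EuclideanSpace ℝ (Fin n))
    (hφ : ContDiffOn ℝ 1 φ Ω)
    (hSO : ∀ x ∈ Ω,
      (∀ v w : EuclideanSpace ℝ (Fin n), ⟪fderiv ℝ φ x v, fderiv ℝ φ x w⟫ = ⟪v, w⟫) ∧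
      LinearMap.det ((fderiv ℝ φ x : EuclideanSpace ℝ (Fin n) →L[ℝ] EuclideanSpace ℝ (Fin n)) :
        EuclideanSpace ℝ (Fin n) →ₗ[ℝ] EuclideanSpace ℝ (Fin n)) = 1) :
    ∃ (Q : EuclideanSpace ℝ (Fin n) →L[ℝ] EuclideanSpace ℝ (Fin n))
      (b : EuclideanSpace ℝ (Fin n)),
      (∀ v w : EuclideanSpace ℝ (Fin n), ⟪Q v, Q w⟫ = ⟪v, w⟫) ∧
      LinearMap.det (Q : EuclideanSpace ℝ (Fin n) →ₗ[ℝ] EuclideanSpace ℝ (Fin n)) = 1 ∧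
      (∀ x ∈ Ω, fderiv ℝ φ x = Q) ∧
      (∀ x ∈ Ω, φ x = Q x + b) := by
  classical
  obtain ⟨x₀, hx₀⟩ := hΩc.nonempty
  set Q := fderiv ℝ φ x₀ with hQ
  set b := φ x₀ - Q x₀ with hb
  -- local constancy of the derivative and the affine data
  have hloc : ∀ x ∈ Ω, ∃ r > 0, Metric.ball x r ⊆ Ω ∧
      (∀ y ∈ Metric.ball x r, fderiv ℝ φ y = fderiv ℝ φ x) ∧
      (∀ y ∈ Metric.ball x r, φ y - fderiv ℝ φ x y = φ x - fderiv ℝ φ x x) := by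
    intro x hx
    obtain ⟨r, hr0, hrΩ, haff⟩ := Stmt17Aux.local_affine hΩo hφ hSO hx
    refine ⟨r, hr0, hrΩ, ?_, ?_⟩
    · intro y hy
      set T := fderiv ℝ φ x with hT
      have hEq : φ =ᶠ[nhds y] fun z => φ x + T (z - x) := by
        filter_upwards [Metric.isOpen_ball.mem_nhds hy] with z hz
        exact haff z hz
      have haffd : HasFDerivAt (fun z => φ x + T (z - x)) T y := by
        have h1 : HasFDerivAt (fun z => φ x + (T z - T x)) T y :=
          ((T.hasFDerivAt (x := y)).sub_const (T x)).const_add (φ x)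
        convert h1 using 2 with z
        rw [map_sub]
      calc fderiv ℝ φ y = fderiv ℝ (fun z => φ x + T (z - x)) y := hEq.fderiv_eq
        _ = T := haffd.fderiv
    · intro y hy
      have := haff y hy
      rw [this, map_sub]
      abel
  -- the clopen argument
  set U := {x | x ∈ Ω ∧ fderiv ℝ φ x = Q ∧ φ x - Q x = b} with hU
  set V := {x | x ∈ Ω ∧ ¬(fderiv ℝ φ x = Q ∧ φ x - Q x = b)} with hV
  have hUopen : IsOpen U := by
    rw [isOpen_iff_mem_nhds]
    intro x hxU
    obtain ⟨hxΩ, hxQ, hxb⟩ := hxU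
    obtain ⟨r, hr0, hrΩ, hder, haffc⟩ := hloc x hxΩ
    rw [Metric.mem_nhds_iff]
    refine ⟨r, hr0, fun y hy => ?_⟩
    have h1 : fderiv ℝ φ y = Q := by rw [hder y hy, hxQ]
    have h2 : φ y - Q y = b := by
      have := haffc y hy
      rw [hxQ] at this
      rw [this, hxb]
    exact ⟨hrΩ hy, h1, h2⟩
  have hVopen : IsOpen V := by
    rw [isOpen_iff_mem_nhds]
    intro x hxV
    obtain ⟨hxΩ, hxn⟩ := hxV
    obtain ⟨r, hr0, hrΩ, hder, haffc⟩ := hloc x hxΩ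
    rw [Metric.mem_nhds_iff]
    refine ⟨r, hr0, fun y hy => ⟨hrΩ hy, fun hyc => ?_⟩⟩
    apply hxn
    obtain ⟨hyQ, hyb⟩ := hyc
    have h1 : fderiv ℝ φ x = Q := by rw [← hder y hy, hyQ]
    refine ⟨h1, ?_⟩
    have h2 := haffc y hy
    rw [h1] at h2
    rw [← hyb, ← h2]
  have hdisj : Disjoint U V := by
    rw [Set.disjoint_left]
    rintro a ⟨haΩ, haP⟩ ⟨_, han⟩
    exact han haP
  have hsub : Ω ⊆ U ∪ V := fun a ha => by
    by_cases h : fderiv ℝ φ a = Q ∧ φ a - Q a = b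
    · exact Or.inl ⟨ha, h⟩
    · exact Or.inr ⟨ha, h⟩
  have hne : (Ω ∩ U).Nonempty := ⟨x₀, hx₀, hx₀, rfl, rfl⟩
  have hΩU : Ω ⊆ U :=
    hΩc.isPreconnected.subset_left_of_subset_union hUopen hVopen hdisj hsub hne
  refine ⟨Q, b, (hSO x₀ hx₀).1, (hSO x₀ hx₀).2, ?_, ?_⟩
  · intro x hx
    exact (hΩU hx).2.1
  · intro x hx
    have := (hΩU hx).2.2
    rw [← this]
    abel
end
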